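/- For every integer k ≥ 1, the dihedral group of order 2k (the Coxeter group of type I₂(k)) is not a Beauville group. -/

import Mathlib

/-- `beauvilleSigma g h` is the set `Σ(g,h)`: the union over all integers `i` and all
`k` in the group of the conjugates `k⁻¹ gⁱ k`, `k⁻¹ hⁱ k` and `k⁻¹ (gh)ⁱ k`. -/
def beauvilleSigma {G : Type*} [Group G] (g h : G) : Set G :=
  {w | ∃ (i : ℤ) (k : G),
    w = k⁻¹ * g ^ i * k ∨ w = k⁻¹ * h ^ i * k ∨ w = k⁻¹ * (g * h) ^ i * k}

/-- `{x₁,y₁}, {x₂,y₂}` is an (unmixed) Beauville structure on `G`: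
both pairs generate `G` and `Σ(x₁,y₁) ∩ Σ(x₂,y₂) = {1}`. -/
def IsBeauvilleStructure {G : Type*} [Group G] (x₁ y₁ x₂ y₂ : G) : Prop :=
  Subgroup.closure {x₁, y₁} = ⊤ ∧ Subgroup.closure {x₂, y₂} = ⊤ ∧
    beauvilleSigma x₁ y₁ ∩ beauvilleSigma x₂ y₂ = {1}

/-- A group is a Beauville group if it admits a Beauville structure. -/
def IsBeauvilleGroup (G : Type*) [Group G] : Prop :=
  ∃ x₁ y₁ x₂ y₂ : G, IsBeauvilleStructure x₁ y₁ x₂ y₂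

/-- A group is a strongly real Beauville group if it admits a Beauville structure
`{x₁,y₁}, {x₂,y₂}` together with an automorphism `φ` and elements `g₁, g₂` such that
`gᵢ φ(xᵢ) gᵢ⁻¹ = xᵢ⁻¹` and `gᵢ φ(yᵢ) gᵢ⁻¹ = yᵢ⁻¹` for `i = 1, 2`. -/
def IsStronglyRealBeauvilleGroup (G : Type*) [Group G] : Prop :=
  ∃ x₁ y₁ x₂ y₂ : G, IsBeauvilleStructure x₁ y₁ x₂ y₂ ∧
    ∃ (φ : G ≃* G) (g₁ g₂ : G),
      g₁ * φ x₁ * g₁⁻¹ = x₁⁻¹ ∧ g₁ * φ y₁ * g₁⁻¹ = y₁⁻¹ ∧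
      g₂ * φ x₂ * g₂⁻¹ = x₂⁻¹ ∧ g₂ * φ y₂ * g₂⁻¹ = y₂⁻¹

namespace BeauvilleDihedralAux

open DihedralGroup

/-- the rotation subgroup of the dihedral group -/
def rotations (k : ℕ) : Subgroup (DihedralGroup k) where
  carrier := Set.range r
  one_mem' := ⟨0, rfl⟩
  mul_mem' := by rintro _ _ ⟨i, rfl⟩ ⟨j, rfl⟩; exact ⟨i + j, rfl⟩
  inv_mem' := by rintro _ ⟨i, rfl⟩; exact ⟨-i, rfl⟩

lemma conj_sr {k : ℕ} (a b : ZMod k) (h : a + b + b = 0) :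
    (r b)⁻¹ * sr a * r b = sr 0 := by
  have h1 : (r b)⁻¹ = r (-b) := rfl
  rw [h1, r_mul_sr, sr_mul_r, sub_neg_eq_add, h]

/-- parity homomorphism data, as a plain function -/
def f {k : ℕ} (h2 : 2 ∣ k) : DihedralGroup k → ZMod 2 × ZMod 2
  | r i => (ZMod.castHom h2 (ZMod 2) i, 0)
  | sr a => (ZMod.castHom h2 (ZMod 2) a, 1)

lemma f_mul {k : ℕ} (h2 : 2 ∣ k) (x y : DihedralGroup k) :
    f h2 (x * y) = f h2 x + f h2 y := by
  have neg2 : ∀ c : ZMod 2, -c = c := by decide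
  have two2 : (0 : ZMod 2) = 1 + 1 := by decide
  rcases x with i | i <;> rcases y with j | j <;>
    refine Prod.ext ?_ ?_ <;>
    simp only [r_mul_r, r_mul_sr, sr_mul_r, sr_mul_sr, f, map_add, map_sub,
      sub_eq_add_neg, map_neg, neg2, Prod.fst_add, Prod.snd_add] <;>
    first
    | exact two2
    | ring

lemma f_inv {k : ℕ} (h2 : 2 ∣ k) (x : DihedralGroup k) : f h2 x⁻¹ = f h2 x := by
  have neg2 : ∀ c : ZMod 2, -c = c := by decide
  rcases x with i | i
  · have h1 : (r i)⁻¹ = r (-i) := rfl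
    simp [h1, f, Prod.ext_iff, map_neg, neg2]
  · have h1 : (sr i)⁻¹ = sr i := rfl
    rw [h1]

lemma Kadd (z w a b : ZMod 2 × ZMod 2) :
    (a = 0 ∨ a = z ∨ a = w ∨ a = z + w) → (b = 0 ∨ b = z ∨ b = w ∨ b = z + w) →
    (a + b = 0 ∨ a + b = z ∨ a + b = w ∨ a + b = z + w) := by
  revert z w a b; decide

lemma castHom_zero_exists {k : ℕ} [NeZero k] (h2 : 2 ∣ k) (a : ZMod k)
    (ha : ZMod.castHom h2 (ZMod 2) a = 0) : ∃ b : ZMod k, a + b + b = 0 := by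
  have hv : ((a.val : ℕ) : ZMod 2) = 0 := by
    rw [ZMod.natCast_val a, ← ZMod.castHom_apply (h := h2)]; exact ha
  obtain ⟨m, hm⟩ := (ZMod.natCast_eq_zero_iff _ _).mp hv
  refine ⟨-(m : ZMod k), ?_⟩
  have hva : ((a.val : ℕ) : ZMod k) = a := by rw [ZMod.natCast_val, ZMod.cast_id]
  rw [← hva, hm]; push_cast; ring

lemma odd_exists {k : ℕ} (hk : Odd k) (a : ZMod k) : ∃ b : ZMod k, a + b + b = 0 := by
  obtain ⟨m, hm⟩ := hk
  refine ⟨-(((m + 1 : ℕ) : ZMod k) * a), ?_⟩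
  have h1 : ((2 * (m + 1) : ℕ) : ZMod k) = 1 := by
    rw [show 2 * (m + 1) = k + 1 from by omega]
    push_cast [ZMod.natCast_self]; ring
  have : a + -(((m + 1 : ℕ) : ZMod k) * a) + -(((m + 1 : ℕ) : ZMod k) * a)
      = a - ((2 * (m + 1) : ℕ) : ZMod k) * a := by push_cast; ring
  rw [this, h1]; ring

lemma key {k : ℕ} [NeZero k] {x y : DihedralGroup k}
    (h : Subgroup.closure {x, y} = ⊤) : sr 0 ∈ beauvilleSigma x y := by
  obtain ⟨a, hmem, b, hab⟩ :
      ∃ a : ZMod k, (x = sr a ∨ y = sr a ∨ x * y = sr a) ∧ ∃ b : ZMod k, a + b + b = 0 := by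
    rcases Nat.even_or_odd k with hke | hko
    · -- even case: parity homomorphism argument
      have h2 : 2 ∣ k := hke.two_dvd
      have hmem : (sr 0 : DihedralGroup k) ∈ Subgroup.closure {x, y} := by
        rw [h]; trivial
      have hP : f h2 (sr 0) = 0 ∨ f h2 (sr 0) = f h2 x ∨ f h2 (sr 0) = f h2 y ∨
          f h2 (sr 0) = f h2 x + f h2 y := by
        refine Subgroup.closure_induction
          (p := fun g _ => f h2 g = 0 ∨ f h2 g = f h2 x ∨ f h2 g = f h2 y ∨
            f h2 g = f h2 x + f h2 y) ?_ ?_ ?_ ?_ hmem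
        · rintro g (rfl | rfl)
          · exact Or.inr (Or.inl rfl)
          · exact Or.inr (Or.inr (Or.inl rfl))
        · left
          have : (1 : DihedralGroup k) = r 0 := rfl
          rw [this]; simp only [f, map_zero, Prod.mk_zero_zero]
        · intro u v _ _ hu hv
          rw [f_mul]
          exact Kadd _ _ _ _ hu hv
        · intro u _ hu
          rw [f_inv]; exact hu
      have hsr0 : f h2 (sr 0) = ((0 : ZMod 2), (1 : ZMod 2)) := by simp [f]
      have hne : ((0 : ZMod 2), (1 : ZMod 2)) ≠ (0 : ZMod 2 × ZMod 2) := by decide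
      have extract : ∀ e : DihedralGroup k, f h2 e = ((0 : ZMod 2), (1 : ZMod 2)) →
          ∃ a : ZMod k, e = sr a ∧ ∃ b : ZMod k, a + b + b = 0 := by
        rintro (i | i) he
        · exfalso
          have := congrArg Prod.snd he
          simp [f] at this
        · refine ⟨i, rfl, castHom_zero_exists h2 i ?_⟩
          have := congrArg Prod.fst he
          simpa [f] using this
      rw [hsr0] at hP
      rcases hP with h0 | hx | hy | hxy
      · exact absurd h0 hne
      · obtain ⟨a, he, hb⟩ := extract x hx.symm
        exact ⟨a, Or.inl he, hb⟩
      · obtain ⟨a, he, hb⟩ := extract y hy.symm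
        exact ⟨a, Or.inr (Or.inl he), hb⟩
      · obtain ⟨a, he, hb⟩ := extract (x * y) (by rw [f_mul]; exact hxy.symm)
        exact ⟨a, Or.inr (Or.inr he), hb⟩
    · -- odd case: some generator is a reflection, and all reflections work
      have hrefl : ∃ a : ZMod k, x = sr a ∨ y = sr a := by
        rcases x with i | i
        · rcases y with j | j
          · exfalso
            have hsub : Subgroup.closure {r i, r j} ≤ rotations k := by
              rw [Subgroup.closure_le]
              rintro g (rfl | rfl)
              · exact ⟨i, rfl⟩
              · exact ⟨j, rfl⟩
            have : (sr 0 : DihedralGroup k) ∈ rotations k := hsub (by rw [h]; trivial)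
            obtain ⟨m, hm⟩ := this
            exact absurd hm (by simp)
          · exact ⟨j, Or.inr rfl⟩
        · exact ⟨i, Or.inl rfl⟩
      obtain ⟨a, ha⟩ := hrefl
      exact ⟨a, by tauto, odd_exists hko a⟩
  refine ⟨1, r b, ?_⟩
  have hc := conj_sr a b hab
  rcases hmem with rfl | rfl | hxy
  · exact Or.inl (by rw [zpow_one]; exact hc.symm)
  · exact Or.inr (Or.inl (by rw [zpow_one]; exact hc.symm))
  · exact Or.inr (Or.inr (by rw [zpow_one, hxy]; exact hc.symm))

end BeauvilleDihedralAux

/-- For every integer `k ≥ 1`, the dihedral group of order `2k` (the Coxeter group of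
type `I₂(k)`) is not a Beauville group. -/
theorem stmt_13 (k : ℕ) (hk : 1 ≤ k) : ¬ IsBeauvilleGroup (DihedralGroup k) := by
  haveI : NeZero k := ⟨by omega⟩
  rintro ⟨x₁, y₁, x₂, y₂, hg₁, hg₂, hint⟩
  have m₁ := BeauvilleDihedralAux.key hg₁
  have m₂ := BeauvilleDihedralAux.key hg₂
  have hmem : (DihedralGroup.sr 0 : DihedralGroup k) ∈ ({1} : Set (DihedralGroup k)) := by
    rw [← hint]; exact ⟨m₁, m₂⟩
  have : (DihedralGroup.sr 0 : DihedralGroup k) = 1 := hmem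
  rw [DihedralGroup.one_def] at this
  exact absurd this (by intro h; cases h)
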